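/- Let f : [0,1] → ℝ be the bilinear fractal interpolant for equally spaced knots X_j = j/N with Y̲_0 = Y̲_N = 0 and s_0 = s_N, and let γ = Σ_{n=1}^N (s_{n−1} + s_n)/2. For r ∈ ℕ let 𝒩(r) denote the minimal number of squares of the form [(k−1)/N^r, k/N^r] × [a, a + N^{−r}] (k ∈ {1, …, N^r}, a ∈ ℝ) needed to cover the graph Γ(f). If γ > 1 and Γ(f) is not a straight line segment, then 𝒩(r)/N^r → ∞ as r → ∞. -/

import Mathlib

open Set Filter

/-- The affine maps `lₙ(x) = (n−1)/N + x/N` for equally spaced knots. -/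
noncomputable def eqL (N n : ℕ) (x : ℝ) : ℝ :=
  ((n : ℝ) - 1) / N + x / N

/-- The bilinear maps
`Bₙ(x, y) = aₙ x + [s_{n−1} + (s_n − s_{n−1}) x]·y + Y̲_{n−1}`, where
`aₙ = Y̲_n − Y̲_{n−1}` and `s_j = Ȳ_j − Y̲_j`. -/
def bilinB (Ylow Yup : ℕ → ℝ) (n : ℕ) (x y : ℝ) : ℝ :=
  (Ylow n - Ylow (n - 1)) * x +
    ((Yup (n - 1) - Ylow (n - 1)) +
      ((Yup n - Ylow n) - (Yup (n - 1) - Ylow (n - 1))) * x) * y +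
    Ylow (n - 1)

/-- `gridCount N M r` is the minimal number of squares of the form
`[(k−1)/Nʳ, k/Nʳ] × [a, a + N⁻ʳ]` (with `k ∈ {1, …, Nʳ}`, `a ∈ ℝ`) needed to cover
`M`. -/
noncomputable def gridCount (N : ℕ) (M : Set (ℝ × ℝ)) (r : ℕ) : ℕ :=
  sInf {m : ℕ | ∃ (k : Fin m → ℕ) (a : Fin m → ℝ),
    (∀ i, 1 ≤ k i ∧ k i ≤ N ^ r) ∧
    M ⊆ ⋃ i, Icc (((k i : ℝ) - 1) / (N : ℝ) ^ r) ((k i : ℝ) / (N : ℝ) ^ r) ×ˢ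
      Icc (a i) (a i + 1 / (N : ℝ) ^ r)}

private lemma sum_Icc_telescope {N : ℕ} (g : ℕ → ℝ) :
    ∑ m ∈ Finset.Icc 1 N, (g m - g (m - 1)) = g N - g 0 := by
  rw [← Finset.Ico_add_one_right_eq_Icc, Finset.sum_Ico_eq_sum_range]
  have h : ∀ i, g (1 + i) - g (1 + i - 1) = g (i + 1) - g i := by
    intro i; congr 2 <;> omega
  rw [Finset.sum_congr rfl fun i _ => h i]
  have : N + 1 - 1 = N := rfl
  rw [this]
  exact Finset.sum_range_sub g N

private lemma key_identity
    (N : ℕ) (hN : 1 < N) (Ylow Yup : ℕ → ℝ) (f : ℝ → ℝ)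
    (hsN : Yup 0 - Ylow 0 = Yup N - Ylow N)
    (hfe : ∀ n, 1 ≤ n → n ≤ N → ∀ x ∈ Icc (0 : ℝ) 1,
      f (eqL N n x) = bilinB Ylow Yup n x (f x))
    (u v w : ℝ) (hu : u ∈ Icc (0:ℝ) 1) (hv : v ∈ Icc (0:ℝ) 1) (hw : w ∈ Icc (0:ℝ) 1) :
    ∑ m ∈ Finset.Icc 1 N,
      ((eqL N m w - eqL N m u) * f (eqL N m v) - (eqL N m w - eqL N m v) * f (eqL N m u)
        - (eqL N m v - eqL N m u) * f (eqL N m w))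
      = (∑ n ∈ Finset.Icc 1 N, ((Yup (n-1) - Ylow (n-1)) + (Yup n - Ylow n)) / 2) / N
        * ((w - u) * f v - (w - v) * f u - (v - u) * f w) := by
  have hN0 : (N : ℝ) ≠ 0 := by positivity
  set D : ℝ := (w - u) * f v - (w - v) * f u - (v - u) * f w with hD
  set K : ℝ := (v - u) * (w - v) * (f u - f w) with hK
  have hsd : ∑ m ∈ Finset.Icc 1 N,
      ((Yup m - Ylow m) - (Yup (m-1) - Ylow (m-1))) = 0 := by
    have h := sum_Icc_telescope (N := N) (fun j => Yup j - Ylow j)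
    rw [h, hsN]; ring
  have hterm : ∀ m ∈ Finset.Icc 1 N,
      ((eqL N m w - eqL N m u) * f (eqL N m v) - (eqL N m w - eqL N m v) * f (eqL N m u)
        - (eqL N m v - eqL N m u) * f (eqL N m w))
      = (D / N) * ((Yup (m-1) - Ylow (m-1)) + ((Yup m - Ylow m) - (Yup (m-1) - Ylow (m-1))) * v)
        + (K / N) * ((Yup m - Ylow m) - (Yup (m-1) - Ylow (m-1))) := by
    intro m hm
    obtain ⟨h1, h2⟩ := Finset.mem_Icc.mp hm
    rw [hfe m h1 h2 u hu, hfe m h1 h2 v hv, hfe m h1 h2 w hw]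
    simp only [bilinB, eqL, hD, hK]
    field_simp
    ring
  rw [Finset.sum_congr rfl hterm, Finset.sum_add_distrib, ← Finset.mul_sum, ← Finset.mul_sum,
    hsd, mul_zero, add_zero]
  have hsA : ∑ m ∈ Finset.Icc 1 N,
      ((Yup (m-1) - Ylow (m-1)) + ((Yup m - Ylow m) - (Yup (m-1) - Ylow (m-1))) * v)
      = ∑ n ∈ Finset.Icc 1 N, ((Yup (n-1) - Ylow (n-1)) + (Yup n - Ylow n)) / 2 := by
    rw [Finset.sum_add_distrib, ← Finset.sum_mul, hsd, zero_mul, add_zero]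
    have h2 : ∀ n ∈ Finset.Icc 1 N, ((Yup (n-1) - Ylow (n-1)) + (Yup n - Ylow n)) / 2
        = (Yup (n-1) - Ylow (n-1)) + ((Yup n - Ylow n) - (Yup (n-1) - Ylow (n-1))) / 2 := by
      intros; ring
    rw [Finset.sum_congr rfl h2, Finset.sum_add_distrib, ← Finset.sum_div, hsd, zero_div, add_zero]
  rw [hsA]
  ring

private noncomputable def devT (f : ℝ → ℝ) (t : ℝ × ℝ × ℝ) : ℝ :=
  (t.2.2 - t.1) * f t.2.1 - (t.2.2 - t.2.1) * f t.1 - (t.2.1 - t.1) * f t.2.2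

private def inCol (N r k : ℕ) (t : ℝ × ℝ × ℝ) : Prop :=
  (k : ℝ)/(N : ℝ)^r ≤ t.1 ∧ t.1 ≤ t.2.1 ∧ t.2.1 ≤ t.2.2 ∧ t.2.2 ≤ ((k : ℝ)+1)/(N : ℝ)^r

private lemma sum_range_pow_succ {N : ℕ} (hN : 0 < N) (r : ℕ) (g : ℕ → ℝ) :
    ∑ i ∈ Finset.range (N ^ (r+1)), g i
      = ∑ m ∈ Finset.range N, ∑ k ∈ Finset.range (N ^ r), g (m * N ^ r + k) := by
  have hpos : 0 < N ^ r := pow_pos hN r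
  rw [← Finset.sum_product']
  refine Finset.sum_nbij' (fun n => (n / N ^ r, n % N ^ r))
    (fun p => p.1 * N ^ r + p.2) ?_ ?_ ?_ ?_ ?_
  · intro n hn
    simp only [Finset.mem_range] at hn ⊢
    rw [Finset.mem_product]
    refine ⟨Finset.mem_range.mpr ?_, Finset.mem_range.mpr (Nat.mod_lt _ hpos)⟩
    have : n < N ^ r * N := by rwa [← pow_succ]
    exact Nat.div_lt_of_lt_mul (by rwa [mul_comm] at this)
  · intro p hp
    rw [Finset.mem_product] at hp
    simp only [Finset.mem_range] at hp ⊢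
    obtain ⟨h1, h2⟩ := hp
    calc p.1 * N ^ r + p.2 < p.1 * N ^ r + N ^ r := by omega
    _ = (p.1 + 1) * N ^ r := by ring
    _ ≤ N * N ^ r := Nat.mul_le_mul_right _ (by omega)
    _ = N ^ (r+1) := by rw [pow_succ, mul_comm]
  · intro n _
    simp only
    rw [mul_comm]
    exact Nat.div_add_mod n (N ^ r)
  · intro p hp
    rw [Finset.mem_product] at hp
    simp only [Finset.mem_range] at hp
    obtain ⟨h1, h2⟩ := hp
    have hd : (p.1 * N ^ r + p.2) / N ^ r = p.1 := by
      rw [add_comm, Nat.add_mul_div_right _ _ hpos, Nat.div_eq_of_lt h2, zero_add]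
    have hm : (p.1 * N ^ r + p.2) % N ^ r = p.2 := by
      rw [add_comm, Nat.add_mul_mod_self_right, Nat.mod_eq_of_lt h2]
    simp [hd, hm]
  · intro n _
    simp only
    congr 1
    rw [mul_comm]
    exact (Nat.div_add_mod n (N ^ r)).symm



private lemma key_identity'
    (N : ℕ) (hN : 1 < N) (Ylow Yup : ℕ → ℝ) (f : ℝ → ℝ)
    (hsN : Yup 0 - Ylow 0 = Yup N - Ylow N)
    (hfe : ∀ n, 1 ≤ n → n ≤ N → ∀ x ∈ Icc (0 : ℝ) 1,
      f (eqL N n x) = bilinB Ylow Yup n x (f x))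
    (t : ℝ × ℝ × ℝ) (hu : t.1 ∈ Icc (0:ℝ) 1) (hv : t.2.1 ∈ Icc (0:ℝ) 1)
    (hw : t.2.2 ∈ Icc (0:ℝ) 1) :
    ∑ m ∈ Finset.range N,
      devT f (eqL N (m+1) t.1, eqL N (m+1) t.2.1, eqL N (m+1) t.2.2)
      = (∑ n ∈ Finset.Icc 1 N, ((Yup (n-1) - Ylow (n-1)) + (Yup n - Ylow n)) / 2) / N
        * devT f t := by
  have h0 := key_identity N hN Ylow Yup f hsN hfe t.1 t.2.1 t.2.2 hu hv hw
  rw [← Finset.Ico_add_one_right_eq_Icc, Finset.sum_Ico_eq_sum_range] at h0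
  have hNs : N + 1 - 1 = N := rfl
  rw [hNs] at h0
  have hc : ∀ i ∈ Finset.range N,
      devT f (eqL N (i+1) t.1, eqL N (i+1) t.2.1, eqL N (i+1) t.2.2)
      = ((eqL N (1+i) t.2.2 - eqL N (1+i) t.1) * f (eqL N (1+i) t.2.1)
          - (eqL N (1+i) t.2.2 - eqL N (1+i) t.2.1) * f (eqL N (1+i) t.1)
          - (eqL N (1+i) t.2.1 - eqL N (1+i) t.1) * f (eqL N (1+i) t.2.2)) := by
    intro i _
    have h1i : 1 + i = i + 1 := by omega
    rw [h1i]
    rfl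
  rw [Finset.sum_congr rfl hc, h0]
  rfl

private lemma families
    (N : ℕ) (hN : 1 < N) (Ylow Yup : ℕ → ℝ) (f : ℝ → ℝ)
    (hsN : Yup 0 - Ylow 0 = Yup N - Ylow N)
    (hfe : ∀ n, 1 ≤ n → n ≤ N → ∀ x ∈ Icc (0 : ℝ) 1,
      f (eqL N n x) = bilinB Ylow Yup n x (f x))
    (j₀ : ℕ) (hj₀N : j₀ ≤ N)
    (hf0 : f 0 = 0) (hf1 : f 1 = 0) (hfj : f ((j₀ : ℝ)/N) = Ylow j₀)
    (hG1 : 1 < ∑ n ∈ Finset.Icc 1 N, ((Yup (n-1) - Ylow (n-1)) + (Yup n - Ylow n)) / 2) :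
    ∀ r : ℕ, ∃ T : ℕ → ℝ × ℝ × ℝ,
      (∀ k < N ^ r, inCol N r k (T k)) ∧
      |Ylow j₀| * ((∑ n ∈ Finset.Icc 1 N,
          ((Yup (n-1) - Ylow (n-1)) + (Yup n - Ylow n)) / 2) / N) ^ r
        ≤ ∑ k ∈ Finset.range (N ^ r), |devT f (T k)| := by
  have hN0 : (0:ℝ) < N := by positivity
  have hNne : (N:ℝ) ≠ 0 := ne_of_gt hN0
  set G : ℝ := ∑ n ∈ Finset.Icc 1 N, ((Yup (n-1) - Ylow (n-1)) + (Yup n - Ylow n)) / 2 with hGdef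
  have hG0 : (0:ℝ) < G / N := by
    apply div_pos (by linarith) hN0
  intro r
  induction r with
  | zero =>
    refine ⟨fun _ => (0, (j₀ : ℝ)/N, 1), ?_, ?_⟩
    · intro k hk
      have hk0 : k = 0 := by simpa using hk
      subst hk0
      refine ⟨by norm_num, by positivity, ?_, by norm_num⟩
      rw [div_le_one hN0]
      exact_mod_cast hj₀N
    · rw [pow_zero, pow_zero, Finset.sum_range_one, mul_one]
      simp only [devT, hf0, hf1, hfj]
      apply le_of_eq
      congr 1
      ring
  | succ r ih =>
    obtain ⟨T, hTcol, hTsum⟩ := ih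
    have hNrpos : 0 < N ^ r := pow_pos (by omega) r
    have hpowR : (0:ℝ) < (N:ℝ) ^ r := by positivity
    have hIcc : ∀ k < N ^ r, (T k).1 ∈ Icc (0:ℝ) 1 ∧ (T k).2.1 ∈ Icc (0:ℝ) 1 ∧
        (T k).2.2 ∈ Icc (0:ℝ) 1 := by
      intro k hk
      obtain ⟨hc1, hc2, hc3, hc4⟩ := hTcol k hk
      have hkl : (0:ℝ) ≤ (k:ℝ)/(N:ℝ)^r := by positivity
      have hkr : ((k:ℝ)+1)/(N:ℝ)^r ≤ 1 := by
        rw [div_le_one hpowR]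
        have : (k:ℕ) + 1 ≤ N ^ r := hk
        exact_mod_cast this
      refine ⟨⟨by linarith, by linarith⟩, ⟨by linarith, by linarith⟩,
        ⟨by linarith, by linarith⟩⟩
    refine ⟨fun k' => (eqL N (k' / N^r + 1) (T (k' % N^r)).1,
                       eqL N (k' / N^r + 1) (T (k' % N^r)).2.1,
                       eqL N (k' / N^r + 1) (T (k' % N^r)).2.2), ?_, ?_⟩
    · intro k' hk'
      dsimp only
      have hkk : k' % N^r < N^r := Nat.mod_lt _ hNrpos
      obtain ⟨hc1, hc2, hc3, hc4⟩ := hTcol (k' % N^r) hkk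
      have hcast : (k' : ℝ) = ((k' / N^r : ℕ) : ℝ) * (N:ℝ)^r + ((k' % N^r : ℕ) : ℝ) := by
        have h := Nat.div_add_mod k' (N^r)
        have h2 : ((N^r * (k' / N^r) + k' % N^r : ℕ) : ℝ) = (k' : ℝ) := by rw [h]
        push_cast at h2
        linarith
      have heq : ∀ x : ℝ, eqL N (k' / N^r + 1) x = ((k' / N^r : ℕ) : ℝ)/N + x/N := by
        intro x
        simp only [eqL]
        push_cast
        ring
      have hleft : (k':ℝ)/(N:ℝ)^(r+1)
          = ((k' / N^r : ℕ) : ℝ)/N + ((k' % N^r : ℕ) : ℝ)/(N:ℝ)^r/N := by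
        rw [hcast]
        field_simp
        ring
      have hright : ((k':ℝ)+1)/(N:ℝ)^(r+1)
          = ((k' / N^r : ℕ) : ℝ)/N + (((k' % N^r : ℕ) : ℝ)+1)/(N:ℝ)^r/N := by
        rw [hcast]
        field_simp
        ring
      refine ⟨?_, ?_, ?_, ?_⟩
      · show (k':ℝ)/(N:ℝ)^(r+1) ≤ eqL N (k' / N^r + 1) (T (k' % N^r)).1
        rw [hleft, heq]
        have h3 : ((k' % N^r : ℕ) : ℝ)/(N:ℝ)^r/N ≤ (T (k' % N^r)).1/N :=
          (div_le_div_iff_of_pos_right hN0).mpr hc1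
        linarith
      · show eqL N (k' / N^r + 1) (T (k' % N^r)).1 ≤ eqL N (k' / N^r + 1) (T (k' % N^r)).2.1
        rw [heq, heq]
        have h3 : (T (k' % N^r)).1/N ≤ (T (k' % N^r)).2.1/N :=
          (div_le_div_iff_of_pos_right hN0).mpr hc2
        linarith
      · show eqL N (k' / N^r + 1) (T (k' % N^r)).2.1 ≤ eqL N (k' / N^r + 1) (T (k' % N^r)).2.2
        rw [heq, heq]
        have h3 : (T (k' % N^r)).2.1/N ≤ (T (k' % N^r)).2.2/N :=
          (div_le_div_iff_of_pos_right hN0).mpr hc3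
        linarith
      · show eqL N (k' / N^r + 1) (T (k' % N^r)).2.2 ≤ ((k':ℝ)+1)/(N:ℝ)^(r+1)
        rw [hright, heq]
        have h3 : (T (k' % N^r)).2.2/N ≤ (((k' % N^r : ℕ) : ℝ)+1)/(N:ℝ)^r/N :=
          (div_le_div_iff_of_pos_right hN0).mpr hc4
        linarith
    · show |Ylow j₀| * (G/N)^(r+1) ≤ ∑ k' ∈ Finset.range (N^(r+1)),
        |devT f (eqL N (k' / N^r + 1) (T (k' % N^r)).1,
                 eqL N (k' / N^r + 1) (T (k' % N^r)).2.1,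
                 eqL N (k' / N^r + 1) (T (k' % N^r)).2.2)|
      have hkey : ∀ k ∈ Finset.range (N^r), (G/N) * |devT f (T k)|
          ≤ ∑ m ∈ Finset.range N,
              |devT f (eqL N (m+1) (T k).1, eqL N (m+1) (T k).2.1, eqL N (m+1) (T k).2.2)| := by
        intro k hk
        rw [Finset.mem_range] at hk
        obtain ⟨hu, hv, hw⟩ := hIcc k hk
        have hid := key_identity' N hN Ylow Yup f hsN hfe (T k) hu hv hw
        calc (G/N) * |devT f (T k)| = |(G/N) * devT f (T k)| := by
              rw [abs_mul, abs_of_nonneg (le_of_lt hG0)]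
        _ = |∑ m ∈ Finset.range N,
              devT f (eqL N (m+1) (T k).1, eqL N (m+1) (T k).2.1, eqL N (m+1) (T k).2.2)| := by
              rw [hid]
        _ ≤ ∑ m ∈ Finset.range N,
              |devT f (eqL N (m+1) (T k).1, eqL N (m+1) (T k).2.1, eqL N (m+1) (T k).2.2)| :=
              Finset.abs_sum_le_sum_abs _ _
      calc |Ylow j₀| * (G/N)^(r+1) = (G/N) * (|Ylow j₀| * (G/N)^r) := by ring
      _ ≤ (G/N) * ∑ k ∈ Finset.range (N^r), |devT f (T k)| :=
            mul_le_mul_of_nonneg_left hTsum (le_of_lt hG0)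
      _ = ∑ k ∈ Finset.range (N^r), (G/N) * |devT f (T k)| := Finset.mul_sum _ _ _
      _ ≤ ∑ k ∈ Finset.range (N^r), ∑ m ∈ Finset.range N,
            |devT f (eqL N (m+1) (T k).1, eqL N (m+1) (T k).2.1, eqL N (m+1) (T k).2.2)| :=
            Finset.sum_le_sum hkey
      _ = ∑ m ∈ Finset.range N, ∑ k ∈ Finset.range (N^r),
            |devT f (eqL N (m+1) (T k).1, eqL N (m+1) (T k).2.1, eqL N (m+1) (T k).2.2)| :=
            Finset.sum_comm
      _ = ∑ k' ∈ Finset.range (N^(r+1)),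
            |devT f (eqL N (k' / N^r + 1) (T (k' % N^r)).1,
                     eqL N (k' / N^r + 1) (T (k' % N^r)).2.1,
                     eqL N (k' / N^r + 1) (T (k' % N^r)).2.2)| := by
            rw [sum_range_pow_succ (by omega : 0 < N) r]
            apply Finset.sum_congr rfl
            intro m hm
            apply Finset.sum_congr rfl
            intro k hk
            rw [Finset.mem_range] at hk
            have hd : (m * N ^ r + k) / N ^ r = m := by
              rw [add_comm, Nat.add_mul_div_right _ _ hNrpos, Nat.div_eq_of_lt hk, zero_add]
            have hmo : (m * N ^ r + k) % N ^ r = k := by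
              rw [add_comm, Nat.add_mul_mod_self_right, Nat.mod_eq_of_lt hk]
            rw [hd, hmo]

private lemma col_pair_bound
    (N r : ℕ) (hN : 1 < N) (f : ℝ → ℝ) (hfC : ContinuousOn f (Icc (0:ℝ) 1))
    (q : ℕ) (κ : Fin q → ℕ) (a : Fin q → ℝ)
    (hcov : {p : ℝ × ℝ | p.1 ∈ Icc (0:ℝ) 1 ∧ p.2 = f p.1} ⊆
      ⋃ i, Icc (((κ i : ℝ) - 1) / (N:ℝ)^r) ((κ i : ℝ)/(N:ℝ)^r) ×ˢ
        Icc (a i) (a i + 1/(N:ℝ)^r))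
    (k : ℕ) (hk : k < N^r) (u v : ℝ)
    (hul : (k:ℝ)/(N:ℝ)^r ≤ u) (huv : u ≤ v) (hvr : v ≤ ((k:ℝ)+1)/(N:ℝ)^r) :
    |f v - f u| ≤ ((Finset.univ.filter (fun i => κ i = k + 1)).card : ℝ) / (N:ℝ)^r := by
  have hpow : (0:ℝ) < (N:ℝ)^r := by positivity
  have hkr : ((k:ℝ)+1)/(N:ℝ)^r ≤ 1 := by
    rw [div_le_one hpow]
    have : (k:ℕ) + 1 ≤ N ^ r := hk
    exact_mod_cast this
  have hkl : (0:ℝ) ≤ (k:ℝ)/(N:ℝ)^r := by positivity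
  have hu01 : u ∈ Icc (0:ℝ) 1 := ⟨by linarith, by linarith⟩
  have hv01 : v ∈ Icc (0:ℝ) 1 := ⟨by linarith, by linarith⟩
  set S : Finset (Fin q) := Finset.univ.filter (fun i => κ i = k + 1) with hS
  have hsub : Ioo (min (f u) (f v)) (max (f u) (f v)) ⊆
      ⋃ i ∈ S, Icc (a i) (a i + 1/(N:ℝ)^r) := by
    intro y hy
    obtain ⟨ξ, hξmem, hξval⟩ : ∃ ξ, ξ ∈ Ioo u v ∧ f ξ = y := by
      have hmono : Icc u v ⊆ Icc (0:ℝ) 1 := Icc_subset_Icc hu01.1 hv01.2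
      rcases le_total (f u) (f v) with hle | hle
      · have hy' : y ∈ Ioo (f u) (f v) := by
          rwa [min_eq_left hle, max_eq_right hle] at hy
        obtain ⟨ξ, h1, h2⟩ := intermediate_value_Ioo huv (hfC.mono hmono) hy'
        exact ⟨ξ, h1, h2⟩
      · have hy' : y ∈ Ioo (f v) (f u) := by
          rwa [min_eq_right hle, max_eq_left hle] at hy
        obtain ⟨ξ, h1, h2⟩ := intermediate_value_Ioo' huv (hfC.mono hmono) hy'
        exact ⟨ξ, h1, h2⟩
    have hξIcc : ξ ∈ Icc (0:ℝ) 1 := ⟨by linarith [hξmem.1], by linarith [hξmem.2]⟩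
    have hmem : ((ξ, y) : ℝ × ℝ) ∈ {p : ℝ × ℝ | p.1 ∈ Icc (0:ℝ) 1 ∧ p.2 = f p.1} :=
      ⟨hξIcc, hξval.symm⟩
    obtain ⟨i, hbox⟩ := Set.mem_iUnion.mp (hcov hmem)
    obtain ⟨⟨hx1, hx2⟩, hy2⟩ := hbox
    have hki : κ i = k + 1 := by
      have h1 : (k:ℝ) < (κ i : ℝ) := by
        have hlt : (k:ℝ)/(N:ℝ)^r < (κ i : ℝ)/(N:ℝ)^r := by
          apply lt_of_le_of_lt hul
          apply lt_of_lt_of_le hξmem.1 hx2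
        rw [div_lt_div_iff_of_pos_right hpow] at hlt
        exact hlt
      have h2 : (κ i : ℝ) - 1 < (k:ℝ) + 1 := by
        have hlt : ((κ i : ℝ) - 1)/(N:ℝ)^r < ((k:ℝ)+1)/(N:ℝ)^r := by
          apply lt_of_le_of_lt hx1
          apply lt_of_lt_of_le hξmem.2 hvr
        rw [div_lt_div_iff_of_pos_right hpow] at hlt
        exact hlt
      have h1' : k < κ i := by exact_mod_cast h1
      have h2' : (κ i : ℝ) < (k:ℝ) + 2 := by linarith
      have h2'' : κ i < k + 2 := by exact_mod_cast h2'
      omega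
    refine Set.mem_iUnion₂.mpr ⟨i, ?_, hy2⟩
    rw [hS, Finset.mem_filter]
    exact ⟨Finset.mem_univ i, hki⟩
  have hmeas : MeasureTheory.volume (Ioo (min (f u) (f v)) (max (f u) (f v)))
      ≤ ∑ i ∈ S, MeasureTheory.volume (Icc (a i) (a i + 1/(N:ℝ)^r)) :=
    le_trans (MeasureTheory.measure_mono hsub) (MeasureTheory.measure_biUnion_finset_le S _)
  rw [Real.volume_Ioo] at hmeas
  have hIccvol : ∀ i : Fin q, MeasureTheory.volume (Icc (a i) (a i + 1/(N:ℝ)^r))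
      = ENNReal.ofReal (1/(N:ℝ)^r) := by
    intro i
    rw [Real.volume_Icc]
    congr 1
    ring
  rw [Finset.sum_congr rfl (fun i _ => hIccvol i), Finset.sum_const, nsmul_eq_mul] at hmeas
  have hcard : ((S.card : ℕ) : ENNReal) = ENNReal.ofReal ((S.card : ℕ) : ℝ) :=
    (ENNReal.ofReal_natCast _).symm
  rw [hcard, ← ENNReal.ofReal_mul (by positivity)] at hmeas
  have hfin : max (f u) (f v) - min (f u) (f v) ≤ ((S.card : ℕ) : ℝ) * (1/(N:ℝ)^r) := by
    have h0 : (0:ℝ) ≤ ((S.card : ℕ) : ℝ) * (1/(N:ℝ)^r) := by positivity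
    exact (ENNReal.ofReal_le_ofReal_iff h0).mp hmeas
  have habs : |f v - f u| = max (f u) (f v) - min (f u) (f v) := by
    rcases le_total (f u) (f v) with hle | hle
    · rw [min_eq_left hle, max_eq_right hle, abs_of_nonneg (by linarith)]
    · rw [min_eq_right hle, max_eq_left hle, abs_of_nonpos (by linarith)]
      ring
  rw [habs]
  calc max (f u) (f v) - min (f u) (f v) ≤ ((S.card : ℕ) : ℝ) * (1/(N:ℝ)^r) := hfin
  _ = ((S.card : ℕ) : ℝ) / (N:ℝ)^r := by ring

private lemma cover_exists
    (N r : ℕ) (hN : 1 < N) (f : ℝ → ℝ) (hfC : ContinuousOn f (Icc (0:ℝ) 1)) :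
    ∃ q : ℕ, ∃ (κ : Fin q → ℕ) (a : Fin q → ℝ),
      (∀ i, 1 ≤ κ i ∧ κ i ≤ N ^ r) ∧
      {p : ℝ × ℝ | p.1 ∈ Icc (0:ℝ) 1 ∧ p.2 = f p.1} ⊆
        ⋃ i, Icc (((κ i : ℝ) - 1)/(N:ℝ)^r) ((κ i : ℝ)/(N:ℝ)^r) ×ˢ
          Icc (a i) (a i + 1/(N:ℝ)^r) := by
  have hpow : (0:ℝ) < (N:ℝ)^r := by positivity
  have hNr1 : 1 ≤ N ^ r := Nat.one_le_pow r N (by omega)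
  obtain ⟨C, hC⟩ := IsCompact.exists_bound_of_continuousOn isCompact_Icc hfC
  have hC0 : 0 ≤ C := le_trans (norm_nonneg _) (hC 0 ⟨le_refl 0, zero_le_one⟩)
  set T : ℕ := ⌈2*C*(N:ℝ)^r⌉₊ + 1 with hT
  have hT0 : 0 < T := Nat.succ_pos _
  refine ⟨N^r * T, fun i => (i : ℕ) / T + 1,
    fun i => -C + ((i : ℕ) % T : ℕ) / (N:ℝ)^r, ?_, ?_⟩
  · intro i
    have hi2 : (i : ℕ) < T * N ^ r := by
      have h := i.2
      calc (i : ℕ) < N ^ r * T := h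
      _ = T * N ^ r := Nat.mul_comm _ _
    have hlt : (i : ℕ) / T < N ^ r := Nat.div_lt_of_lt_mul hi2
    exact ⟨Nat.le_add_left 1 _, hlt⟩
  · rintro ⟨x, y⟩ ⟨hpx, hpy⟩
    simp only at hpx hpy
    have habs : |f x| ≤ C := by rw [← Real.norm_eq_abs]; exact hC x hpx
    have hfx1 : f x ≤ C := (abs_le.mp habs).2
    have hfx2 : -C ≤ f x := (abs_le.mp habs).1
    have hx0 : (0:ℝ) ≤ x := hpx.1
    have hx1 : x ≤ 1 := hpx.2
    set c₀ : ℕ := min ⌊x*(N:ℝ)^r⌋₊ (N^r - 1) with hc₀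
    set j₀ : ℕ := ⌊(f x + C)*(N:ℝ)^r⌋₊ with hj₀
    have hj₀T : j₀ < T := by
      have h1 : (f x + C)*(N:ℝ)^r ≤ 2*C*(N:ℝ)^r := by nlinarith
      have h2 : j₀ ≤ ⌊2*C*(N:ℝ)^r⌋₊ := Nat.floor_mono h1
      have h3 : ⌊2*C*(N:ℝ)^r⌋₊ ≤ ⌈2*C*(N:ℝ)^r⌉₊ := Nat.floor_le_ceil _
      omega
    have hc₀N : c₀ ≤ N^r - 1 := min_le_right _ _
    have hidx : c₀ * T + j₀ < N^r * T := by
      calc c₀ * T + j₀ < c₀ * T + T := by omega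
      _ = (c₀ + 1) * T := by ring
      _ ≤ N^r * T := Nat.mul_le_mul_right _ (by omega)
    refine Set.mem_iUnion.mpr ⟨⟨c₀ * T + j₀, hidx⟩, ?_⟩
    have hdecdiv : (c₀ * T + j₀) / T = c₀ := by
      rw [add_comm, Nat.add_mul_div_right _ _ hT0, Nat.div_eq_of_lt hj₀T, zero_add]
    have hdecmod : (c₀ * T + j₀) % T = j₀ := by
      rw [add_comm, Nat.add_mul_mod_self_right, Nat.mod_eq_of_lt hj₀T]
    have hxlow : ((c₀:ℝ)) ≤ x * (N:ℝ)^r ∧ x * (N:ℝ)^r ≤ (c₀:ℝ) + 1 := by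
      rcases lt_or_ge (⌊x*(N:ℝ)^r⌋₊) (N^r) with hcase | hcase
      · have hmin : c₀ = ⌊x*(N:ℝ)^r⌋₊ := min_eq_left (by omega)
        constructor
        · rw [hmin]; exact Nat.floor_le (by positivity)
        · rw [hmin]; exact le_of_lt (Nat.lt_floor_add_one _)
      · have hmin : c₀ = N^r - 1 := min_eq_right (by omega)
        have hge : ((N^r : ℕ):ℝ) ≤ x * (N:ℝ)^r := (Nat.le_floor_iff (by positivity)).mp hcase
        have hle : x * (N:ℝ)^r ≤ ((N^r : ℕ):ℝ) := by
          push_cast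
          nlinarith
        constructor
        · rw [hmin, Nat.cast_sub hNr1]; push_cast at hge ⊢; linarith
        · rw [hmin, Nat.cast_sub hNr1]; push_cast at hle ⊢; linarith
    have hylow : ((j₀:ℝ)) ≤ (f x + C) * (N:ℝ)^r ∧ (f x + C) * (N:ℝ)^r < (j₀:ℝ) + 1 := by
      constructor
      · exact Nat.floor_le (by nlinarith)
      · exact Nat.lt_floor_add_one _
    refine Set.mem_prod.mpr ⟨?_, ?_⟩
    · show x ∈ Icc _ _
      simp only [hdecdiv]
      constructor
      · push_cast
        rw [div_le_iff₀ hpow]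
        have : ((c₀:ℝ) + 1 - 1) = (c₀:ℝ) := by ring
        rw [this]
        exact hxlow.1
      · push_cast
        rw [le_div_iff₀ hpow]
        exact hxlow.2
    · show y ∈ Icc _ _
      simp only [hdecmod]
      have h1 : ((j₀:ℝ))/(N:ℝ)^r ≤ f x + C := by
        rw [div_le_iff₀ hpow]
        exact hylow.1
      have h2 : f x + C < ((j₀:ℝ) + 1)/(N:ℝ)^r := by
        rw [lt_div_iff₀ hpow]
        exact hylow.2
      have h3 : ((j₀:ℝ) + 1)/(N:ℝ)^r = (j₀:ℝ)/(N:ℝ)^r + 1/(N:ℝ)^r := by ring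
      rw [hpy]
      constructor
      · linarith
      · rw [h3] at h2
        linarith

/-- Let `f : [0,1] → ℝ` be the bilinear fractal interpolant for
equally spaced knots `X_j = j/N`, with `Y̲_0 = Y̲_N = 0` and `s_0 = s_N`, and let
`γ = Σₙ (s_{n−1} + s_n)/2`.  Let `𝒩(r)` be the minimal number of grid squares of side
`N⁻ʳ` (of the form `[(k−1)/Nʳ, k/Nʳ] × [a, a + N⁻ʳ]`) needed to cover the graph
`Γ(f)`.  If `γ > 1` and `Γ(f)` is not a straight line segment (i.e. the data points
`(j/N, Y̲_j)` are not collinear), then `𝒩(r)/Nʳ → ∞` as `r → ∞`. -/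
theorem gridCount_div_pow_tendsto_atTop
    (N : ℕ) (hN : 1 < N) (Ylow Yup : ℕ → ℝ)
    (hY : ∀ j ≤ N, 0 ≤ Ylow j ∧ Ylow j ≤ Yup j ∧ Yup j < 1)
    (hY0 : Ylow 0 = 0) (hYN : Ylow N = 0)
    (hsN : Yup 0 - Ylow 0 = Yup N - Ylow N)
    (f : ℝ → ℝ)
    (hfC : ContinuousOn f (Icc (0 : ℝ) 1))
    (hfi : ∀ j ≤ N, f ((j : ℝ) / N) = Ylow j)
    (hfe : ∀ n, 1 ≤ n → n ≤ N → ∀ x ∈ Icc (0 : ℝ) 1,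
      f (eqL N n x) = bilinB Ylow Yup n x (f x))
    (hγ : 1 < ∑ n ∈ Finset.Icc 1 N,
      ((Yup (n - 1) - Ylow (n - 1)) + (Yup n - Ylow n)) / 2)
    (hline : ¬ ∃ c d : ℝ, ∀ j ≤ N, Ylow j = c * ((j : ℝ) / N) + d) :
    Tendsto
      (fun r : ℕ =>
        (gridCount N {p : ℝ × ℝ | p.1 ∈ Icc (0 : ℝ) 1 ∧ p.2 = f p.1} r : ℝ) /
          (N : ℝ) ^ r)
      atTop atTop := by
  have hN0 : (0:ℝ) < N := by exact_mod_cast Nat.lt_of_lt_of_le Nat.zero_lt_one hN.le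
  set G : ℝ := ∑ n ∈ Finset.Icc 1 N,
      ((Yup (n - 1) - Ylow (n - 1)) + (Yup n - Ylow n)) / 2 with hGdef
  push_neg at hline
  obtain ⟨j₀, hj₀N, hj₀⟩ := hline 0 0
  have hδ : 0 < |Ylow j₀| := by
    rw [abs_pos]
    intro h
    apply hj₀
    rw [h]; ring
  have hf0 : f 0 = 0 := by
    have h := hfi 0 (Nat.zero_le N)
    simpa [hY0] using h
  have hf1 : f 1 = 0 := by
    have h := hfi N (le_refl N)
    rw [div_self (ne_of_gt hN0)] at h
    rw [h, hYN]
  have hfj : f ((j₀:ℝ)/N) = Ylow j₀ := hfi j₀ hj₀N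
  have hfam := families N hN Ylow Yup f hsN hfe j₀ hj₀N hf0 hf1 hfj hγ
  -- lower bound for any member of the covering set
  have hbound : ∀ r : ℕ, ∀ q ∈ {m : ℕ | ∃ (k : Fin m → ℕ) (a : Fin m → ℝ),
      (∀ i, 1 ≤ k i ∧ k i ≤ N ^ r) ∧
      {p : ℝ × ℝ | p.1 ∈ Icc (0 : ℝ) 1 ∧ p.2 = f p.1} ⊆
        ⋃ i, Icc (((k i : ℝ) - 1) / (N : ℝ) ^ r) ((k i : ℝ) / (N : ℝ) ^ r) ×ˢ
          Icc (a i) (a i + 1 / (N : ℝ) ^ r)},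
      |Ylow j₀| * G ^ r * (N:ℝ) ^ r ≤ (q : ℝ) := by
    intro r q hq
    obtain ⟨κ, a, hka, hcov⟩ := hq
    obtain ⟨T, hTcol, hTsum⟩ := hfam r
    rw [← hGdef] at hTsum
    have hpow : (0:ℝ) < (N:ℝ)^r := by positivity
    have hcol : ∀ k ∈ Finset.range (N^r), |devT f (T k)|
        ≤ (((Finset.univ.filter (fun i => κ i = k + 1)).card : ℕ) : ℝ)
            / (N:ℝ)^r / (N:ℝ)^r := by
      intro k hk
      rw [Finset.mem_range] at hk
      obtain ⟨hc1, hc2, hc3, hc4⟩ := hTcol k hk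
      set u := (T k).1
      set v := (T k).2.1
      set w := (T k).2.2
      set B : ℝ := (((Finset.univ.filter (fun i => κ i = k + 1)).card : ℕ) : ℝ) / (N:ℝ)^r
        with hB
      have hB0 : 0 ≤ B := by positivity
      have hb1 : |f v - f u| ≤ B :=
        col_pair_bound N r hN f hfC q κ a hcov k hk u v hc1 hc2 (le_trans hc3 hc4)
      have hb2 : |f w - f v| ≤ B :=
        col_pair_bound N r hN f hfC q κ a hcov k hk v w (le_trans hc1 hc2) hc3 hc4
      have hdev : devT f (T k) = (w - v) * (f v - f u) + (v - u) * (f v - f w) := by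
        simp only [devT]
        ring
      have hwu : w - u ≤ 1/(N:ℝ)^r := by
        have heq : ((k:ℝ)+1)/(N:ℝ)^r - (k:ℝ)/(N:ℝ)^r = 1/(N:ℝ)^r := by ring
        linarith
      calc |devT f (T k)| = |(w - v) * (f v - f u) + (v - u) * (f v - f w)| := by rw [hdev]
      _ ≤ |(w - v) * (f v - f u)| + |(v - u) * (f v - f w)| := abs_add_le _ _
      _ = (w - v) * |f v - f u| + (v - u) * |f v - f w| := by
            rw [abs_mul, abs_mul, abs_of_nonneg (by linarith : (0:ℝ) ≤ w - v),
              abs_of_nonneg (by linarith : (0:ℝ) ≤ v - u)]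
      _ ≤ (w - v) * B + (v - u) * B := by
            have h1 : (w - v) * |f v - f u| ≤ (w - v) * B :=
              mul_le_mul_of_nonneg_left hb1 (by linarith)
            have h2 : (v - u) * |f v - f w| ≤ (v - u) * B := by
              rw [abs_sub_comm]
              exact mul_le_mul_of_nonneg_left hb2 (by linarith)
            linarith
      _ = (w - u) * B := by ring
      _ ≤ (1/(N:ℝ)^r) * B := mul_le_mul_of_nonneg_right hwu hB0
      _ = B / (N:ℝ)^r := by ring
      _ = (((Finset.univ.filter (fun i => κ i = k + 1)).card : ℕ) : ℝ)
            / (N:ℝ)^r / (N:ℝ)^r := by rw [hB]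
    -- total cardinality
    have hdisj : ∀ k1 ∈ Finset.range (N^r), ∀ k2 ∈ Finset.range (N^r), k1 ≠ k2 →
        Disjoint (Finset.univ.filter (fun i : Fin q => κ i = k1 + 1))
          (Finset.univ.filter (fun i : Fin q => κ i = k2 + 1)) := by
      intro k1 _ k2 _ hne
      rw [Finset.disjoint_left]
      intro i hi1 hi2
      rw [Finset.mem_filter] at hi1 hi2
      omega
    have hcards : ∑ k ∈ Finset.range (N^r),
        ((Finset.univ.filter (fun i : Fin q => κ i = k + 1)).card) ≤ q := by
      rw [← Finset.card_biUnion hdisj]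
      calc ((Finset.range (N^r)).biUnion
            (fun k => Finset.univ.filter (fun i : Fin q => κ i = k + 1))).card
          ≤ (Finset.univ : Finset (Fin q)).card :=
            Finset.card_le_card (Finset.subset_univ _)
      _ = q := Finset.card_fin q
    have hcardsR : ∑ k ∈ Finset.range (N^r),
        (((Finset.univ.filter (fun i : Fin q => κ i = k + 1)).card : ℕ) : ℝ) ≤ (q:ℝ) := by
      exact_mod_cast hcards
    have hchain : |Ylow j₀| * (G/(N:ℝ))^r ≤ (q:ℝ) / ((N:ℝ)^r * (N:ℝ)^r) := by
      calc |Ylow j₀| * (G/(N:ℝ))^r ≤ ∑ k ∈ Finset.range (N^r), |devT f (T k)| := hTsum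
      _ ≤ ∑ k ∈ Finset.range (N^r),
            (((Finset.univ.filter (fun i : Fin q => κ i = k + 1)).card : ℕ) : ℝ)
              / (N:ℝ)^r / (N:ℝ)^r := Finset.sum_le_sum hcol
      _ = (∑ k ∈ Finset.range (N^r),
            (((Finset.univ.filter (fun i : Fin q => κ i = k + 1)).card : ℕ) : ℝ))
              / (N:ℝ)^r / (N:ℝ)^r := by rw [Finset.sum_div, Finset.sum_div]
      _ ≤ (q:ℝ) / (N:ℝ)^r / (N:ℝ)^r := by gcongr
      _ = (q:ℝ) / ((N:ℝ)^r * (N:ℝ)^r) := by rw [div_div]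
    have hfinal := mul_le_mul_of_nonneg_right hchain
      (le_of_lt (mul_pos hpow hpow))
    have hL : |Ylow j₀| * (G/(N:ℝ))^r * ((N:ℝ)^r * (N:ℝ)^r)
        = |Ylow j₀| * G ^ r * (N:ℝ)^r := by
      rw [div_pow]
      field_simp
    have hR : (q:ℝ) / ((N:ℝ)^r * (N:ℝ)^r) * ((N:ℝ)^r * (N:ℝ)^r) = (q:ℝ) := by
      field_simp
    rw [hL, hR] at hfinal
    exact hfinal
  -- gridCount lower bound and conclusion
  have hgc : ∀ r : ℕ, |Ylow j₀| * G ^ r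
      ≤ (gridCount N {p : ℝ × ℝ | p.1 ∈ Icc (0 : ℝ) 1 ∧ p.2 = f p.1} r : ℝ) / (N:ℝ)^r := by
    intro r
    have hpow : (0:ℝ) < (N:ℝ)^r := by positivity
    obtain ⟨q0, κ0, a0, hka0, hcov0⟩ := cover_exists N r hN f hfC
    have hne : {m : ℕ | ∃ (k : Fin m → ℕ) (a : Fin m → ℝ),
        (∀ i, 1 ≤ k i ∧ k i ≤ N ^ r) ∧
        {p : ℝ × ℝ | p.1 ∈ Icc (0 : ℝ) 1 ∧ p.2 = f p.1} ⊆
          ⋃ i, Icc (((k i : ℝ) - 1) / (N : ℝ) ^ r) ((k i : ℝ) / (N : ℝ) ^ r) ×ˢ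
            Icc (a i) (a i + 1 / (N : ℝ) ^ r)}.Nonempty :=
      ⟨q0, κ0, a0, hka0, hcov0⟩
    have hmem := Nat.sInf_mem hne
    have hb := hbound r _ hmem
    rw [le_div_iff₀ hpow]
    exact hb
  have h1 : Tendsto (fun r : ℕ => G ^ r) atTop atTop :=
    tendsto_pow_atTop_atTop_of_one_lt hγ
  have h2 : Tendsto (fun r : ℕ => |Ylow j₀| * G ^ r) atTop atTop :=
    Tendsto.const_mul_atTop hδ h1
  exact tendsto_atTop_mono hgc h2
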